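/- Let y ∈ ℝ^d with y_1 ≤ y_2 ≤ ... ≤ y_d, and let x ∈ ℝ^d satisfy ∑_i (y_i − x_i) = 1 with y_i − x_i ≥ 0 for all i and x_1 ≤ x_2 ≤ ... ≤ x_d. Let α* be the unique real with ∑_i max(y_i − α*, 0) = 1. Then x_d ≥ α*. -/
import Mathlib

open Finset

/-- If `y` is nondecreasing, `x ≤ y` coordinatewise with `x` nondecreasing and
`∑ (y_i − x_i) = 1`, and `α*` satisfies `∑ max(y_i − α*, 0) = 1`, then the largest
coordinate of `x` is at least `α*`. -/
theorem last_coord_ge_alphaStar (d : ℕ) (y x : Fin (d + 1) → ℝ)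
    (hy : Monotone y) (hx : Monotone x)
    (hxy : ∀ i, 0 ≤ y i - x i)
    (hsum : ∑ i : Fin (d + 1), (y i - x i) = 1)
    (αstar : ℝ)
    (hα : ∑ i : Fin (d + 1), max (y i - αstar) 0 = 1) :
    αstar ≤ x (Fin.last d) := by
  by_contra h
  push_neg at h
  -- every x i < αstar
  have hlt : ∀ i, x i < αstar := fun i => lt_of_le_of_lt (hx (Fin.le_last i)) h
  -- exists i with 0 < y i - x i
  have hex : ∃ i ∈ Finset.univ, 0 < y i - x i := by
    by_contra hc
    push_neg at hc
    have : ∑ i : Fin (d + 1), (y i - x i) ≤ 0 := by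
      apply Finset.sum_nonpos
      intro i hi
      exact hc i hi
    linarith
  obtain ⟨i₀, _, hi₀⟩ := hex
  have key : ∑ i : Fin (d + 1), max (y i - αstar) 0 < ∑ i : Fin (d + 1), (y i - x i) := by
    apply Finset.sum_lt_sum
    · intro i _
      rcases le_or_gt (y i - αstar) 0 with hle | hgt
      · rw [max_eq_right hle]; exact hxy i
      · rw [max_eq_left hgt.le]
        have := hlt i
        linarith
    · refine ⟨i₀, Finset.mem_univ _, ?_⟩
      rcases le_or_gt (y i₀ - αstar) 0 with hle | hgt
      · rw [max_eq_right hle]; exact hi₀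
      · rw [max_eq_left hgt.le]
        have := hlt i₀
        linarith
  rw [hα, hsum] at key
  exact lt_irrefl 1 key
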